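/- Let n ≥ 2 and m ≥ 1 be integers and let C, D ∈ ℝ^{m×m}. Define the block matrix K ∈ ℝ^{nm×nm} whose first block row is (C, C, …, C) and whose i-th block row, for i = 2,…,n, has D in block column 1, −D in block column i, and 0 in all other block columns. Then K is invertible if and only if both C and D are invertible. -/

import Mathlib

open Matrix

theorem stmt_13 (n m : ℕ) (hn : 2 ≤ n) (hm : 1 ≤ m)
    (C D : Matrix (Fin m) (Fin m) ℝ)
    (K : Matrix (Fin n × Fin m) (Fin n × Fin m) ℝ)
    (hK : ∀ (i : Fin n) (k : Fin m) (j : Fin n) (l : Fin m),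
      K (i, k) (j, l) =
        if (i : ℕ) = 0 then C k l
        else if (j : ℕ) = 0 then D k l
        else if j = i then -(D k l) else 0) :
    IsUnit K.det ↔ IsUnit C.det ∧ IsUnit D.det := by
  have hn0 : (0:ℕ) < n := by omega
  set j0 : Fin n := ⟨0, by omega⟩ with hj0
  set j1 : Fin n := ⟨1, by omega⟩ with hj1
  have hj0c : (j0 : ℕ) = 0 := rfl
  have hj1c : (j1 : ℕ) = 1 := rfl
  have hcoe : ∀ j : Fin n, (j : ℕ) = 0 ↔ j = j0 := by
    intro j; constructor
    · intro h; exact Fin.ext h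
    · intro h; rw [h]
  simp only [isUnit_iff_ne_zero]
  constructor
  · intro hKdet
    constructor
    · -- det C ≠ 0
      intro hC
      apply hKdet
      rw [← Matrix.exists_vecMul_eq_zero_iff] at hC ⊢
      obtain ⟨w, hw, hwC⟩ := hC
      refine ⟨fun p => if p.1 = j0 then w p.2 else 0, ?_, ?_⟩
      · intro h
        apply hw
        funext k
        have := congrFun h (j0, k)
        simpa using this
      · funext p
        obtain ⟨j, l⟩ := p
        have hwCl := congrFun hwC l
        simp only [Matrix.vecMul, dotProduct, Pi.zero_apply] at hwCl ⊢
        rw [Fintype.sum_prod_type]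
        simp only [hK, ite_mul, zero_mul]
        rw [Finset.sum_eq_single j0]
        · simpa [hj0c] using hwCl
        · intro b _ hb
          simp [hb]
        · simp
    · -- det D ≠ 0
      intro hD
      apply hKdet
      rw [← Matrix.exists_vecMul_eq_zero_iff] at hD ⊢
      obtain ⟨w, hw, hwD⟩ := hD
      refine ⟨fun p => if p.1 = j1 then w p.2 else 0, ?_, ?_⟩
      · intro h
        apply hw
        funext k
        have := congrFun h (j1, k)
        simpa using this
      · funext p
        obtain ⟨j, l⟩ := p
        have hwDl := congrFun hwD l
        simp only [Matrix.vecMul, dotProduct, Pi.zero_apply] at hwDl ⊢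
        rw [Fintype.sum_prod_type]
        simp only [hK, ite_mul, zero_mul]
        rw [Finset.sum_eq_single j1]
        rotate_left
        · intro b _ hb
          simp [hb]
        · simp
        simp only [hj1c, if_pos rfl, Nat.one_ne_zero, if_false]
        by_cases h0 : (j : ℕ) = 0
        · simp only [h0, if_true]
          simpa using hwDl
        · simp only [h0, if_false]
          by_cases h1 : j = j1
          · simp only [h1, if_pos rfl, if_true, mul_neg]
            rw [Finset.sum_neg_distrib, hwDl, neg_zero]
          · simp [h1]
  · rintro ⟨hC, hD⟩ hKdet
    rw [← Matrix.exists_mulVec_eq_zero_iff] at hKdet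
    obtain ⟨x, hx0, hKx⟩ := hKdet
    -- row computation
    have hrow : ∀ (i : Fin n) (k : Fin m),
        ∑ j : Fin n, ∑ l, K (i, k) (j, l) * x (j, l) = 0 := by
      intro i k
      have := congrFun hKx (i, k)
      simpa [Matrix.mulVec, dotProduct, Fintype.sum_prod_type] using this
    -- step 1 : all columns equal
    have hcols : ∀ i : Fin n, (fun l => x (i, l)) = fun l => x (j0, l) := by
      intro i
      by_cases hi : (i:ℕ) = 0
      · rw [(hcoe i).mp hi]
      · have hDv : D *ᵥ (fun l => x (j0, l) - x (i, l)) = 0 := by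
          funext k
          have h := hrow i k
          simp only [hK, hi, if_false] at h
          have hij : i ≠ j0 := fun h' => hi (by rw [h'])
          have : ∀ j : Fin n, ∑ l, (if (j:ℕ) = 0 then D k l else if j = i then -(D k l) else 0) * x (j, l)
              = (if j = j0 then ∑ l, D k l * x (j0, l) else 0)
                + (if j = i then ∑ l, -(D k l) * x (i, l) else 0) := by
            intro j
            by_cases h0 : (j:ℕ) = 0
            · have hj : j = j0 := (hcoe j).mp h0
              simp [hj, h0, hij.symm, Ne.symm hij, hj0c]
            · by_cases h1 : j = i
              · simp [h0, h1, hi, hij]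
              · have hjj0 : j ≠ j0 := fun h' => h0 ((hcoe j).mpr h')
                simp [h0, h1, hjj0]
          rw [Finset.sum_congr rfl (fun j _ => this j)] at h
          rw [Finset.sum_add_distrib, Finset.sum_ite_eq' Finset.univ j0,
            Finset.sum_ite_eq' Finset.univ i] at h
          simp only [Finset.mem_univ, if_true] at h
          simp only [Matrix.mulVec, dotProduct, Pi.zero_apply]
          calc ∑ l, D k l * (x (j0, l) - x (i, l))
              = ∑ l, D k l * x (j0, l) + ∑ l, -(D k l) * x (i, l) := by
                simp [mul_sub, Finset.sum_sub_distrib, sub_eq_add_neg, neg_mul, mul_add,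
                  mul_neg, Finset.sum_add_distrib, Finset.sum_neg_distrib]
            _ = 0 := h
        have : (fun l => x (j0, l) - x (i, l)) = 0 := by
          by_contra hne
          exact hD (Matrix.exists_mulVec_eq_zero_iff.mp ⟨_, hne, hDv⟩)
        funext l
        have := congrFun this l
        simp only [Pi.zero_apply, sub_eq_zero] at this
        exact this.symm
    -- step 2 : C *ᵥ xcol0 = 0
    have hCx : C *ᵥ (fun l => x (j0, l)) = 0 := by
      have hkey : ∀ k, (n : ℝ) * ∑ l, C k l * x (j0, l) = 0 := by
        intro k
        have h := hrow j0 k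
        simp only [hK, hj0c, if_true, eq_self_iff_true] at h
        have : ∀ j : Fin n, ∑ l, C k l * x (j, l) = ∑ l, C k l * x (j0, l) := by
          intro j
          have := hcols j
          exact Finset.sum_congr rfl (fun l _ => by rw [congrFun this l])
        have h2 : ∑ j : Fin n, ∑ l, C k l * x (j, l) = ∑ j : Fin n, ∑ l, C k l * x (j0, l) :=
          Finset.sum_congr rfl (fun j _ => this j)
        rw [h2, Finset.sum_const, Finset.card_univ, Fintype.card_fin, nsmul_eq_mul] at h
        exact h
      funext k
      have := hkey k
      have hne : (n : ℝ) ≠ 0 := Nat.cast_ne_zero.mpr (by omega)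
      simp only [Matrix.mulVec, dotProduct, Pi.zero_apply]
      exact (mul_eq_zero.mp this).resolve_left hne
    have hx00 : (fun l => x (j0, l)) = 0 := by
      by_contra hne
      exact hC (Matrix.exists_mulVec_eq_zero_iff.mp ⟨_, hne, hCx⟩)
    apply hx0
    funext p
    obtain ⟨j, l⟩ := p
    have := congrFun (hcols j) l
    rw [this, congrFun hx00 l]
    rfl
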